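/- arXiv:1207.2317 — 4 statements merged into one kernel-verified Lean document; each statement's English description precedes it below -/
import Mathlib

section
/- If T is a ŵ_p-shortest path tree from r (i.e., for every vertex v, the path T[r,v] is lexicographically minimal with respect to ŵ_p among all paths from r to v), then ρ(T,p) = ρ(p), where ρ(p) is the maximum of ρ(T',p) over all shortest path trees T' with respect to w_p. -/
/-- A directed graph: a type of edges with source and target maps. -/
structure Dgraph (V : Type) (E : Type) where
  src : E → V
  tgt : E → V

/-- `IsWalk G u v π`: the list of edges `π` forms a walk from `u` to `v` in `G`. -/
def IsWalk {V E : Type} (G : Dgraph V E) : V → V → List E → Prop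
  | u, v, [] => u = v
  | u, v, e :: es => G.src e = u ∧ IsWalk G (G.tgt e) v es

/-- A path is a walk without repeated edges. -/
def IsPath {V E : Type} (G : Dgraph V E) (u v : V) (π : List E) : Prop :=
  IsWalk G u v π ∧ π.Nodup

/-- Total weight of a list of edges under the weight function `w`. -/
def wval {E : Type} (w : E → ℝ) (π : List E) : ℝ := (π.map w).sum

/-- Total price of the priceable edges (those in `EP`) along `π`. -/
def pval {E : Type} [DecidableEq E] (p : E → ℝ) (EP : Finset E) (π : List E) : ℝ :=
  ((π.filter (· ∈ EP)).map p).sum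

/-- `χ(π) = Σ_{e_i ∈ π ∩ E_P} 2^{idx e_i}`. -/
def chival {E : Type} [DecidableEq E] (EP : Finset E) (idx : E → ℕ) (π : List E) : ℝ :=
  ((π.filter (· ∈ EP)).map (fun e => (2 : ℝ) ^ idx e)).sum

/-- The weight function `w_p`: price `p e` on priceable edges, fixed cost `c e` otherwise. -/
def wp {E : Type} [DecidableEq E] (c p : E → ℝ) (EP : Finset E) (e : E) : ℝ :=
  if e ∈ EP then p e else c e

/-- Strict lexicographic order on `ℝ × ℝ × ℝ`. -/
def lexLt (a b : ℝ × ℝ × ℝ) : Prop :=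
  a.1 < b.1 ∨ (a.1 = b.1 ∧ (a.2.1 < b.2.1 ∨ (a.2.1 = b.2.1 ∧ a.2.2 < b.2.2)))

/-- Non-strict lexicographic order on `ℝ × ℝ × ℝ`. -/
def lexLe (a b : ℝ × ℝ × ℝ) : Prop := lexLt a b ∨ a = b

/-- The composite weight `ŵ_p(π) = (w_p(π), -p(π), -χ(π))`. -/
def hatw {E : Type} [DecidableEq E] (c p : E → ℝ) (EP : Finset E) (idx : E → ℕ)
    (π : List E) : ℝ × ℝ × ℝ :=
  (wval (wp c p EP) π, -(pval p EP π), -(chival EP idx π))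

/-- `T` is a `ŵ_p`-shortest path tree from `r`: for every vertex `v`, `T v` is a path from
`r` to `v` that is lexicographically minimal with respect to `ŵ_p` among all such paths. -/
def IsHatSPT {V E : Type} [DecidableEq E] (G : Dgraph V E) (r : V)
    (c p : E → ℝ) (EP : Finset E) (idx : E → ℕ) (T : V → List E) : Prop :=
  ∀ v, IsPath G r v (T v) ∧
    ∀ π, IsPath G r v π → lexLe (hatw c p EP idx (T v)) (hatw c p EP idx π)

/-- `T` is a shortest path tree from `r` with respect to `w_p`. -/
def IsSPT {V E : Type} [DecidableEq E] (G : Dgraph V E) (r : V)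
    (c p : E → ℝ) (EP : Finset E) (T : V → List E) : Prop :=
  ∀ v, IsPath G r v (T v) ∧
    ∀ π, IsPath G r v π → wval (wp c p EP) (T v) ≤ wval (wp c p EP) π

/-- The last priceable edge along `π` (if any). -/
def lastP {E : Type} [DecidableEq E] (EP : Finset E) (π : List E) : Option E :=
  (π.filter (· ∈ EP)).getLast?

/-- If `T` is a `ŵ_p`-shortest path tree from `r`, then `ρ(T,p) = ρ(p)`: `T` is a shortest
path tree for `w_p`, and its revenue `Σ_v φ(v)·p(T[r,v])` is maximal among all shortest path
trees with respect to `w_p`. -/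
theorem stmt_3 {V E : Type} [Fintype V] [DecidableEq E]
    (G : Dgraph V E) (r : V) (EP : Finset E) (c p : E → ℝ) (idx : E → ℕ)
    (φ : V → ℝ) (hφ : ∀ v, 0 ≤ φ v)
    (hc : ∀ e ∉ EP, 0 < c e) (hp : ∀ e ∈ EP, 0 < p e)
    (T : V → List E) (hT : IsHatSPT G r c p EP idx T) :
    IsSPT G r c p EP T ∧
      ∀ T' : V → List E, IsSPT G r c p EP T' →
        ∑ v, φ v * pval p EP (T' v) ≤ ∑ v, φ v * pval p EP (T v) := by
  have hw : ∀ v π, IsPath G r v π →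
      wval (wp c p EP) (T v) ≤ wval (wp c p EP) π := by
    intro v π hπ
    have h := (hT v).2 π hπ
    rcases h with h | h
    · rcases h with h | ⟨h, _⟩
      · exact le_of_lt h
      · exact le_of_eq h
    · exact le_of_eq (congrArg Prod.fst h)
  have hSPT : IsSPT G r c p EP T := fun v => ⟨(hT v).1, hw v⟩
  refine ⟨hSPT, fun T' hT' => ?_⟩
  apply Finset.sum_le_sum
  intro v _
  have hpath' := (hT' v).1
  have heq : wval (wp c p EP) (T v) = wval (wp c p EP) (T' v) :=
    le_antisymm (hw v _ hpath') ((hT' v).2 _ (hT v).1)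
  have h := (hT v).2 (T' v) hpath'
  have hple : pval p EP (T' v) ≤ pval p EP (T v) := by
    rcases h with h | h
    · rcases h with h | ⟨_, h | ⟨h, _⟩⟩
      · simp [hatw] at h; linarith [heq, h]
      · simp [hatw] at h; linarith
      · simp [hatw] at h; linarith
    · have := congrArg (fun x => x.2.1) h
      simp [hatw] at this; linarith
  exact mul_le_mul_of_nonneg_left hple (hφ v)
end

section
/- If T and T' are both ŵ_p-shortest path trees from r, then the reduced trees obtained by contracting all fixed-cost edges are equal: for any two priceable edges e_i, e_j, edge e_i is a descendant of e_j in T if and only if e_i is a descendant of e_j in T'. In particular, T and T' contain the same subset of priceable edges. -/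
/-- The last priceable edge along `π` (if any). -/

lemma sum_range_two_pow_lt (n : ℕ) : ∑ i ∈ Finset.range n, 2^i < 2^n := by
  induction n with
  | zero => simp
  | succ n ih => rw [Finset.sum_range_succ, pow_succ]; omega

lemma max_mem_other (s t : Finset ℕ) (M : ℕ) (hMs : M ∈ s)
    (ht : ∀ n ∈ t, n ≤ M) (hsum : (∑ n ∈ s, 2^n) = ∑ n ∈ t, 2^n) : M ∈ t := by
  by_contra hMt
  have hsub : t ⊆ Finset.range M := by
    intro n hn
    have h1 := ht n hn
    have h2 : n ≠ M := fun h => hMt (h ▸ hn)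
    simp only [Finset.mem_range]; omega
  have h1 : (∑ n ∈ t, 2^n) ≤ ∑ i ∈ Finset.range M, 2^i :=
    Finset.sum_le_sum_of_subset hsub
  have h2 : 2^M ≤ ∑ n ∈ s, 2^n :=
    Finset.single_le_sum (fun i _ => Nat.zero_le _) hMs
  have := sum_range_two_pow_lt M
  omega

lemma sum_two_pow_eq_zero {t : Finset ℕ} (h : (∑ n ∈ t, 2^n) = 0) : t = ∅ := by
  rw [Finset.eq_empty_iff_forall_notMem]
  intro x hx
  have : (2:ℕ)^x ≤ ∑ n ∈ t, 2^n := Finset.single_le_sum (fun i _ => Nat.zero_le _) hx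
  have := Nat.two_pow_pos x
  omega

lemma two_pow_sum_inj : ∀ N (s t : Finset ℕ), s.card + t.card ≤ N →
    (∑ n ∈ s, 2^n) = (∑ n ∈ t, 2^n) → s = t := by
  intro N
  induction N with
  | zero =>
    intro s t hc _
    rw [Finset.card_eq_zero.mp (by omega : s.card = 0),
        Finset.card_eq_zero.mp (by omega : t.card = 0)]
  | succ N ih =>
    intro s t hcard hsum
    by_cases hs : s = ∅
    · subst hs
      simp only [Finset.sum_empty] at hsum
      exact (sum_two_pow_eq_zero hsum.symm).symm
    by_cases htmp : t = ∅
    · subst htmp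
      simp only [Finset.sum_empty] at hsum
      exact sum_two_pow_eq_zero hsum
    have hne : (s ∪ t).Nonempty := by
      rcases Finset.nonempty_iff_ne_empty.mpr hs with ⟨x, hx⟩
      exact ⟨x, Finset.mem_union_left _ hx⟩
    set M := (s ∪ t).max' hne with hM
    have hMmem : M ∈ s ∪ t := Finset.max'_mem _ _
    have hle : ∀ n ∈ s ∪ t, n ≤ M := fun n hn => Finset.le_max' _ _ hn
    have hMs : M ∈ s ∧ M ∈ t := by
      rcases Finset.mem_union.mp hMmem with h | h
      · exact ⟨h, max_mem_other s t M h (fun n hn => hle n (Finset.mem_union_right _ hn)) hsum⟩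
      · exact ⟨max_mem_other t s M h (fun n hn => hle n (Finset.mem_union_left _ hn)) hsum.symm, h⟩
    have hes : (∑ n ∈ s.erase M, 2^n) + 2^M = ∑ n ∈ s, 2^n := Finset.sum_erase_add _ _ hMs.1
    have het : (∑ n ∈ t.erase M, 2^n) + 2^M = ∑ n ∈ t, 2^n := Finset.sum_erase_add _ _ hMs.2
    have hcs := Finset.card_erase_of_mem hMs.1
    have hct := Finset.card_erase_of_mem hMs.2
    have hcs1 : 1 ≤ s.card := Finset.card_pos.mpr ⟨M, hMs.1⟩
    have hct1 : 1 ≤ t.card := Finset.card_pos.mpr ⟨M, hMs.2⟩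
    have heq : s.erase M = t.erase M := ih _ _ (by omega) (by omega)
    ext n
    by_cases hn : n = M
    · subst hn; simp [hMs.1, hMs.2]
    · have := Finset.ext_iff.mp heq n
      simp only [Finset.mem_erase, hn, ne_eq, not_false_eq_true, true_and] at this
      exact this

lemma lexLe_antisymm' (a b : ℝ × ℝ × ℝ)
    (h : (a.1 < b.1 ∨ (a.1 = b.1 ∧ (a.2.1 < b.2.1 ∨ (a.2.1 = b.2.1 ∧ a.2.2 < b.2.2)))) ∨ a = b)
    (h' : (b.1 < a.1 ∨ (b.1 = a.1 ∧ (b.2.1 < a.2.1 ∨ (b.2.1 = a.2.1 ∧ b.2.2 < a.2.2)))) ∨ b = a) :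
    a = b := by
  rcases h with h | h
  · rcases h' with h' | h'
    · exfalso
      rcases h with h | ⟨e, h | ⟨e2, h⟩⟩ <;> rcases h' with h' | ⟨e', h' | ⟨e2', h'⟩⟩ <;> linarith
    · exact h'.symm
  · exact h

lemma chival_mem {E : Type} [DecidableEq E] (EP : Finset E) (idx : E → ℕ)
    (hidx : ∀ e ∈ EP, ∀ e' ∈ EP, idx e = idx e' → e = e')
    (two_pow_sum_inj : ∀ N (s t : Finset ℕ), s.card + t.card ≤ N →
      (∑ n ∈ s, 2^n) = (∑ n ∈ t, 2^n) → s = t)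
    (l1 l2 : List E) (h1 : l1.Nodup) (h2 : l2.Nodup)
    (hc : ((l1.filter (· ∈ EP)).map (fun e => (2 : ℝ) ^ idx e)).sum
        = ((l2.filter (· ∈ EP)).map (fun e => (2 : ℝ) ^ idx e)).sum)
    (e : E) (he : e ∈ EP) : (e ∈ l1 ↔ e ∈ l2) := by
  set f1 := l1.filter (· ∈ EP) with hf1
  set f2 := l2.filter (· ∈ EP) with hf2
  have hn1 : f1.Nodup := h1.filter _
  have hn2 : f2.Nodup := h2.filter _
  have hsub1 : ∀ x ∈ f1.toFinset, x ∈ EP := by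
    intro x hx; simp only [hf1, List.mem_toFinset, List.mem_filter] at hx
    simpa using hx.2
  have hsub2 : ∀ x ∈ f2.toFinset, x ∈ EP := by
    intro x hx; simp only [hf2, List.mem_toFinset, List.mem_filter] at hx
    simpa using hx.2
  have hs1 : (∑ x ∈ f1.toFinset, (2:ℝ) ^ idx x) = (f1.map (fun e => (2 : ℝ) ^ idx e)).sum :=
    List.sum_toFinset _ hn1
  have hs2 : (∑ x ∈ f2.toFinset, (2:ℝ) ^ idx x) = (f2.map (fun e => (2 : ℝ) ^ idx e)).sum :=
    List.sum_toFinset _ hn2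
  have hinj1 : Set.InjOn idx f1.toFinset := fun a ha b hb hab =>
    hidx a (hsub1 a ha) b (hsub1 b hb) hab
  have hinj2 : Set.InjOn idx f2.toFinset := fun a ha b hb hab =>
    hidx a (hsub2 a ha) b (hsub2 b hb) hab
  have him1 : (∑ n ∈ f1.toFinset.image idx, (2:ℝ)^n) = ∑ x ∈ f1.toFinset, (2:ℝ) ^ idx x :=
    Finset.sum_image (fun a ha b hb => hinj1 ha hb)
  have him2 : (∑ n ∈ f2.toFinset.image idx, (2:ℝ)^n) = ∑ x ∈ f2.toFinset, (2:ℝ) ^ idx x :=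
    Finset.sum_image (fun a ha b hb => hinj2 ha hb)
  have hreal : (∑ n ∈ f1.toFinset.image idx, (2:ℝ)^n) = ∑ n ∈ f2.toFinset.image idx, (2:ℝ)^n := by
    rw [him1, him2, hs1, hs2]; exact hc
  have hnat : (∑ n ∈ f1.toFinset.image idx, (2:ℕ)^n) = ∑ n ∈ f2.toFinset.image idx, (2:ℕ)^n := by
    have : ((∑ n ∈ f1.toFinset.image idx, (2:ℕ)^n : ℕ) : ℝ)
         = ((∑ n ∈ f2.toFinset.image idx, (2:ℕ)^n : ℕ) : ℝ) := by
      push_cast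
      exact hreal
    exact_mod_cast this
  have hsets : f1.toFinset.image idx = f2.toFinset.image idx :=
    two_pow_sum_inj _ _ _ le_rfl hnat
  have key : ∀ (l : List E) (fl : List E), fl = l.filter (· ∈ EP) →
      (∀ x ∈ fl.toFinset, x ∈ EP) →
      (e ∈ l ↔ idx e ∈ fl.toFinset.image idx) := by
    intro l fl hfl hsub
    constructor
    · intro hel
      apply Finset.mem_image_of_mem
      simp [hfl, List.mem_filter, hel, he]
    · intro him
      obtain ⟨x, hx, hxe⟩ := Finset.mem_image.mp him
      have : x = e := hidx x (hsub x hx) e he hxe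
      subst this
      simp only [hfl, List.mem_toFinset, List.mem_filter] at hx
      exact hx.1
  rw [key l1 f1 hf1 hsub1, key l2 f2 hf2 hsub2, hsets]

/-- If `T` and `T'` are both `ŵ_p`-shortest path trees from `r`, then their reduced trees
coincide: priceable edge `e_i` is a descendant of `e_j` in `T` (i.e. `e_j` lies on both
`T[r,s_i]` and `T[r,t_i]`) iff the same holds in `T'`; in particular `T` and `T'` contain
the same subset of priceable edges. -/
theorem stmt_5 {V E : Type} [DecidableEq E]
    (G : Dgraph V E) (r : V) (EP : Finset E) (c p : E → ℝ) (idx : E → ℕ)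
    (hc : ∀ e ∉ EP, 0 < c e) (hp : ∀ e ∈ EP, 0 < p e)
    (hidx : ∀ e ∈ EP, ∀ e' ∈ EP, idx e = idx e' → e = e')
    (k : ℕ) (pe : Fin k → E) (hpe_inj : Function.Injective pe)
    (hpe_mem : ∀ i, pe i ∈ EP)
    (T T' : V → List E)
    (hT : IsHatSPT G r c p EP idx T) (hT' : IsHatSPT G r c p EP idx T') :
    (∀ i j : Fin k,
        ((pe j ∈ T (G.src (pe i)) ∧ pe j ∈ T (G.tgt (pe i))) ↔
          (pe j ∈ T' (G.src (pe i)) ∧ pe j ∈ T' (G.tgt (pe i))))) ∧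
      ∀ i : Fin k, (∃ v, pe i ∈ T v) ↔ (∃ v, pe i ∈ T' v) := by
  have hvv : ∀ v, ∀ e ∈ EP, (e ∈ T v ↔ e ∈ T' v) := by
    intro v e he
    obtain ⟨hp1, hmin1⟩ := hT v
    obtain ⟨hp2, hmin2⟩ := hT' v
    have heq : hatw c p EP idx (T v) = hatw c p EP idx (T' v) :=
      lexLe_antisymm' _ _ (hmin1 _ hp2) (hmin2 _ hp1)
    have hchi : chival EP idx (T v) = chival EP idx (T' v) := by
      have h3 := congrArg (fun x : ℝ × ℝ × ℝ => x.2.2) heq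
      simp only [hatw, neg_inj] at h3
      exact h3
    have hc' : (((T v).filter (· ∈ EP)).map (fun e => (2 : ℝ) ^ idx e)).sum
        = (((T' v).filter (· ∈ EP)).map (fun e => (2 : ℝ) ^ idx e)).sum := hchi
    exact chival_mem EP idx hidx two_pow_sum_inj (T v) (T' v) hp1.2 hp2.2 hc' e he
  constructor
  · intro i j
    rw [hvv _ _ (hpe_mem j), hvv _ _ (hpe_mem j)]
  · intro i
    constructor
    · rintro ⟨v, hv⟩; exact ⟨v, (hvv v _ (hpe_mem i)).mp hv⟩
    · rintro ⟨v, hv⟩; exact ⟨v, (hvv v _ (hpe_mem i)).mpr hv⟩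
end

section
/- Let T and T' be ŵ_p-shortest path trees and for each priceable edge e_i let V_T(e_i,p) be the set of vertices v such that e_i is the last priceable edge on T[r,v]. Then V_T(e_i,p) = V_{T'}(e_i,p) for every i. -/
set_option linter.unusedSectionVars false
set_option maxHeartbeats 1000000

/- ============ auxiliary lemmas ============ -/

section WalkLemmas
variable {V E : Type} {G : Dgraph V E} {w : E → ℝ}

lemma isWalk_append : ∀ {A : List E} {u x : V} {B : List E},
    IsWalk G u x (A ++ B) ↔ ∃ m, IsWalk G u m A ∧ IsWalk G m x B := by
  intro A
  induction A with
  | nil =>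
    intro u x B
    constructor
    · intro h; exact ⟨u, rfl, h⟩
    · rintro ⟨m, hm, h⟩; cases hm; exact h
  | cons e es ih =>
    intro u x B
    constructor
    · rintro ⟨hs, h⟩
      obtain ⟨m, h1, h2⟩ := ih.1 h
      exact ⟨m, ⟨hs, h1⟩, h2⟩
    · rintro ⟨m, ⟨hs, h1⟩, h2⟩
      exact ⟨hs, ih.2 ⟨m, h1, h2⟩⟩

lemma wval_cons (e : E) (l : List E) : wval w (e :: l) = w e + wval w l := by simp [wval]

lemma wval_append (A B : List E) : wval w (A ++ B) = wval w A + wval w B := by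
  simp [wval]

lemma wval_nonneg (hw : ∀ e, 0 < w e) (π : List E) : 0 ≤ wval w π := by
  apply List.sum_nonneg
  intro x hx
  obtain ⟨e, _, rfl⟩ := List.mem_map.1 hx
  exact (hw e).le

lemma pathify (hw : ∀ e, 0 < w e) :
    ∀ n (π : List E), π.length ≤ n → ∀ u v : V, IsWalk G u v π →
      ∃ π', IsWalk G u v π' ∧ π'.Nodup ∧ wval w π' ≤ wval w π ∧
        (¬ π.Nodup → wval w π' < wval w π) ∧ π' ⊆ π := by
  intro n
  induction n with
  | zero =>
    intro π hlen u v hwalk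
    rw [Nat.le_zero, List.length_eq_zero_iff] at hlen
    subst hlen
    exact ⟨[], hwalk, List.nodup_nil, le_rfl, fun h => absurd List.nodup_nil h, List.nil_subset _⟩
  | succ n ih =>
    intro π hlen u v hwalk
    match π with
    | [] => exact ⟨[], hwalk, List.nodup_nil, le_rfl, fun h => absurd List.nodup_nil h, List.nil_subset _⟩
    | e :: rest =>
      obtain ⟨hs, hrest⟩ := hwalk
      by_cases he : e ∈ rest
      · obtain ⟨Y, Z, hYZ⟩ := List.append_of_mem he
        subst hYZ
        obtain ⟨m, hY, hZ⟩ := isWalk_append.1 hrest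
        obtain ⟨hs2, hZ2⟩ := hZ
        have hwalk2 : IsWalk G u v (e :: Z) := ⟨hs, hZ2⟩
        have hlen2 : (e :: Z).length ≤ n := by
          simp only [List.length_cons, List.length_append] at hlen ⊢
          omega
        obtain ⟨π', h1, h2, h3, _, h5⟩ := ih (e :: Z) hlen2 u v hwalk2
        have key : wval w (e :: Z) < wval w (e :: (Y ++ e :: Z)) := by
          rw [wval_cons, wval_cons, wval_append, wval_cons]
          have := wval_nonneg hw (w := w) Y
          have := hw e
          linarith
        refine ⟨π', h1, h2, le_of_lt (lt_of_le_of_lt h3 key), fun _ => lt_of_le_of_lt h3 key, ?_⟩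
        intro x hx
        rcases List.mem_cons.1 (h5 hx) with h | h
        · exact h ▸ List.mem_cons_self
        · exact List.mem_cons_of_mem _ (List.mem_append_right _ (List.mem_cons_of_mem _ h))
      · have hlen2 : rest.length ≤ n := by simpa using hlen
        obtain ⟨π', h1, h2, h3, h4, h5⟩ := ih rest hlen2 (G.tgt e) v hrest
        refine ⟨e :: π', ⟨hs, h1⟩, ?_, ?_, ?_, ?_⟩
        · exact List.nodup_cons.2 ⟨fun hc => he (h5 hc), h2⟩
        · rw [wval_cons, wval_cons]; linarith
        · intro hnd
          have : ¬ rest.Nodup := by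
            intro hr
            exact hnd (List.nodup_cons.2 ⟨he, hr⟩)
          have := h4 this
          rw [wval_cons, wval_cons]; linarith
        · exact List.cons_subset_cons e h5

end WalkLemmas

lemma lexLt_asymm {a b : ℝ × ℝ × ℝ} (h1 : lexLt a b) (h2 : lexLt b a) : False := by
  unfold lexLt at h1 h2
  rcases h1 with h1 | ⟨e1, h1 | ⟨f1, h1⟩⟩ <;> rcases h2 with h2 | ⟨e2, h2 | ⟨f2, h2⟩⟩ <;> linarith

lemma lexLe_antisymm {a b : ℝ × ℝ × ℝ} (h1 : lexLe a b) (h2 : lexLe b a) : a = b := by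
  rcases h1 with h1 | rfl
  · rcases h2 with h2 | h2
    · exact absurd h2 (fun h => lexLt_asymm h1 h)
    · exact h2.symm
  · rfl

lemma lexLe_fst {a b : ℝ × ℝ × ℝ} (h : lexLe a b) : a.1 ≤ b.1 := by
  rcases h with h | rfl
  · rcases h with h | ⟨e, _⟩
    · exact h.le
    · exact e.le
  · exact le_rfl

lemma split_of_filter_getLast? {E : Type} {q : E → Bool} :
    ∀ {π : List E} {a : E}, (π.filter q).getLast? = some a →
      ∃ ρ σ, π = ρ ++ a :: σ ∧ σ.filter q = [] ∧ q a := by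
  intro π
  induction π with
  | nil => intro a h; simp at h
  | cons e t ih =>
    intro a h
    rw [List.filter_cons] at h
    by_cases hq : q e
    · rw [if_pos hq] at h
      cases ht : t.filter q with
      | nil =>
        rw [ht] at h
        simp at h
        subst h
        exact ⟨[], t, rfl, ht, hq⟩
      | cons x xs =>
        rw [ht, List.getLast?_cons_cons, ← ht] at h
        obtain ⟨ρ, σ, h1, h2, h3⟩ := ih h
        exact ⟨e :: ρ, σ, by rw [h1]; rfl, h2, h3⟩
    · rw [if_neg hq] at h
      obtain ⟨ρ, σ, h1, h2, h3⟩ := ih h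
      exact ⟨e :: ρ, σ, by rw [h1]; rfl, h2, h3⟩

lemma sum_two_pow_lt (n : ℕ) : ∑ i ∈ Finset.range n, 2 ^ i < 2 ^ n := by
  induction n with
  | zero => simp
  | succ n ih =>
    rw [Finset.sum_range_succ, pow_succ]
    omega

lemma sum_two_pow_inj : ∀ N (s t : Finset ℕ), (∀ n ∈ s, n < N) → (∀ n ∈ t, n < N) →
    ∑ n ∈ s, 2 ^ n = ∑ n ∈ t, 2 ^ n → s = t := by
  intro N
  induction N with
  | zero =>
    intro s t hs ht _
    have h1 : s = ∅ := Finset.eq_empty_of_forall_notMem (fun n hn => Nat.not_lt_zero n (hs n hn))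
    have h2 : t = ∅ := Finset.eq_empty_of_forall_notMem (fun n hn => Nat.not_lt_zero n (ht n hn))
    rw [h1, h2]
  | succ N ih =>
    intro s t hs ht hsum
    have bound : ∀ u : Finset ℕ, (∀ n ∈ u, n < N) → ∑ n ∈ u, 2 ^ n < 2 ^ N := by
      intro u hu
      calc ∑ n ∈ u, 2 ^ n ≤ ∑ n ∈ Finset.range N, 2 ^ n :=
            Finset.sum_le_sum_of_subset (fun n hn => Finset.mem_range.2 (hu n hn))
        _ < 2 ^ N := sum_two_pow_lt N
    by_cases hNs : N ∈ s <;> by_cases hNt : N ∈ t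
    · have hs' : ∑ n ∈ s.erase N, 2 ^ n = ∑ n ∈ t.erase N, 2 ^ n := by
        have e1 : 2 ^ N + ∑ n ∈ s.erase N, 2 ^ n = ∑ n ∈ s, 2 ^ n :=
          Finset.add_sum_erase s (fun n => 2 ^ n) hNs
        have e2 : 2 ^ N + ∑ n ∈ t.erase N, 2 ^ n = ∑ n ∈ t, 2 ^ n :=
          Finset.add_sum_erase t (fun n => 2 ^ n) hNt
        omega
      have := ih (s.erase N) (t.erase N)
        (fun n hn => by
          have := hs n (Finset.mem_of_mem_erase hn)
          have := Finset.ne_of_mem_erase hn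
          omega)
        (fun n hn => by
          have := ht n (Finset.mem_of_mem_erase hn)
          have := Finset.ne_of_mem_erase hn
          omega) hs'
      have h1 : s = insert N (s.erase N) := (Finset.insert_erase hNs).symm
      have h2 : t = insert N (t.erase N) := (Finset.insert_erase hNt).symm
      rw [h1, h2, this]
    · exfalso
      have h1 : (2 : ℕ) ^ N ≤ ∑ n ∈ s, 2 ^ n :=
        Finset.single_le_sum (fun n _ => Nat.zero_le _) hNs
      have h2 : ∑ n ∈ t, 2 ^ n < 2 ^ N :=
        bound t (fun n hn => by have := ht n hn; rcases Nat.lt_succ_iff_lt_or_eq.1 this with h | h; exact h; exact absurd (h ▸ hn) hNt)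
      omega
    · exfalso
      have h1 : (2 : ℕ) ^ N ≤ ∑ n ∈ t, 2 ^ n :=
        Finset.single_le_sum (fun n _ => Nat.zero_le _) hNt
      have h2 : ∑ n ∈ s, 2 ^ n < 2 ^ N :=
        bound s (fun n hn => by have := hs n hn; rcases Nat.lt_succ_iff_lt_or_eq.1 this with h | h; exact h; exact absurd (h ▸ hn) hNs)
      omega
    · exact ih s t
        (fun n hn => by have := hs n hn; rcases Nat.lt_succ_iff_lt_or_eq.1 this with h | h; exact h; exact absurd (h ▸ hn) hNs)
        (fun n hn => by have := ht n hn; rcases Nat.lt_succ_iff_lt_or_eq.1 this with h | h; exact h; exact absurd (h ▸ hn) hNt)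
        hsum

lemma chival_eq_sum {E : Type} [DecidableEq E] (EP : Finset E) (idx : E → ℕ)
    (hidx : ∀ e ∈ EP, ∀ e' ∈ EP, idx e = idx e' → e = e')
    {π : List E} (hnd : π.Nodup) :
    chival EP idx π = ∑ n ∈ ((π.filter (· ∈ EP)).map idx).toFinset, (2 : ℝ) ^ n := by
  have hF : (π.filter (· ∈ EP)).Nodup := hnd.filter _
  have hmapnd : ((π.filter (· ∈ EP)).map idx).Nodup := by
    apply hF.map_on
    intro x hx y hy hxy
    have hxEP : x ∈ EP := by simpa using (List.mem_filter.1 hx).2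
    have hyEP : y ∈ EP := by simpa using (List.mem_filter.1 hy).2
    exact hidx x hxEP y hyEP hxy
  rw [List.sum_toFinset _ hmapnd]
  unfold chival
  rw [List.map_map]
  rfl

lemma chival_mem_iff {E : Type} [DecidableEq E] {EP : Finset E} {idx : E → ℕ}
    (hidx : ∀ e ∈ EP, ∀ e' ∈ EP, idx e = idx e' → e = e')
    {π π' : List E} (hnd : π.Nodup) (hnd' : π'.Nodup)
    (h : chival EP idx π = chival EP idx π') :
    ∀ e, e ∈ π.filter (· ∈ EP) ↔ e ∈ π'.filter (· ∈ EP) := by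
  set s := ((π.filter (· ∈ EP)).map idx).toFinset with hs
  set t := ((π'.filter (· ∈ EP)).map idx).toFinset with ht
  have hsum : ∑ n ∈ s, (2 : ℝ) ^ n = ∑ n ∈ t, (2 : ℝ) ^ n := by
    rw [← chival_eq_sum EP idx hidx hnd, ← chival_eq_sum EP idx hidx hnd', h]
  have hnat : ∑ n ∈ s, 2 ^ n = ∑ n ∈ t, 2 ^ n := by
    have : ((∑ n ∈ s, 2 ^ n : ℕ) : ℝ) = ((∑ n ∈ t, 2 ^ n : ℕ) : ℝ) := by
      push_cast
      exact hsum
    exact_mod_cast this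
  have hst : s = t := by
    apply sum_two_pow_inj (s.sup id + t.sup id + 1) s t _ _ hnat
    · intro n hn
      have := Finset.le_sup (f := id) hn
      simp only [id_eq] at this
      omega
    · intro n hn
      have := Finset.le_sup (f := id) hn
      simp only [id_eq] at this
      omega
  intro e
  constructor
  · intro he
    have heEP : e ∈ EP := by simpa using (List.mem_filter.1 he).2
    have : idx e ∈ t := by
      rw [← hst]
      exact List.mem_toFinset.2 (List.mem_map_of_mem (f := idx) he)
    obtain ⟨e', he', hie⟩ := List.mem_map.1 (List.mem_toFinset.1 this)
    have he'EP : e' ∈ EP := by simpa using (List.mem_filter.1 he').2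
    rwa [hidx e' he'EP e heEP hie] at he'
  · intro he
    have heEP : e ∈ EP := by simpa using (List.mem_filter.1 he).2
    have : idx e ∈ s := by
      rw [hst]
      exact List.mem_toFinset.2 (List.mem_map_of_mem (f := idx) he)
    obtain ⟨e', he', hie⟩ := List.mem_map.1 (List.mem_toFinset.1 this)
    have he'EP : e' ∈ EP := by simpa using (List.mem_filter.1 he').2
    rwa [hidx e' he'EP e heEP hie] at he'

lemma lastP_eq_of_hatSPT {V E : Type} [DecidableEq E]
    {G : Dgraph V E} {r : V} {EP : Finset E} {c p : E → ℝ} {idx : E → ℕ}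
    (hc : ∀ e ∉ EP, 0 < c e) (hp : ∀ e ∈ EP, 0 < p e)
    (hidx : ∀ e ∈ EP, ∀ e' ∈ EP, idx e = idx e' → e = e')
    {T T' : V → List E}
    (hT : IsHatSPT G r c p EP idx T) (hT' : IsHatSPT G r c p EP idx T')
    (v : V) : lastP EP (T v) = lastP EP (T' v) := by
  obtain ⟨⟨hw1, hnd1⟩, hmin⟩ := hT v
  obtain ⟨⟨hw2, hnd2⟩, hmin'⟩ := hT' v
  have hwpos : ∀ e, 0 < wp c p EP e := by
    intro e
    unfold wp
    split
    · exact hp e ‹_›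
    · exact hc e ‹_›
  have heq : hatw c p EP idx (T v) = hatw c p EP idx (T' v) :=
    lexLe_antisymm (hmin _ ⟨hw2, hnd2⟩) (hmin' _ ⟨hw1, hnd1⟩)
  have hwveq : wval (wp c p EP) (T v) = wval (wp c p EP) (T' v) := congrArg Prod.fst heq
  have hchi : chival EP idx (T v) = chival EP idx (T' v) := by
    have := congrArg (fun x => x.2.2) heq
    simp only [hatw] at this
    linarith
  have hmemiff := chival_mem_iff hidx hnd1 hnd2 hchi
  by_cases hF : (T v).filter (· ∈ EP) = []
  · have hF' : (T' v).filter (· ∈ EP) = [] := by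
      by_contra hne
      obtain ⟨x, hx⟩ := List.exists_mem_of_ne_nil _ hne
      have : x ∈ (T v).filter (· ∈ EP) := (hmemiff x).2 hx
      rw [hF] at this
      exact absurd this List.not_mem_nil
    unfold lastP
    rw [hF, hF']
  · have hF' : (T' v).filter (· ∈ EP) ≠ [] := by
      intro hcon
      obtain ⟨x, hx⟩ := List.exists_mem_of_ne_nil _ hF
      have : x ∈ (T' v).filter (· ∈ EP) := (hmemiff x).1 hx
      rw [hcon] at this
      exact absurd this List.not_mem_nil
    set a := ((T v).filter (· ∈ EP)).getLast hF with ha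
    set b := ((T' v).filter (· ∈ EP)).getLast hF' with hb
    have hla : lastP EP (T v) = some a := List.getLast?_eq_getLast hF
    have hlb : lastP EP (T' v) = some b := List.getLast?_eq_getLast hF'
    by_cases hab : a = b
    · rw [hla, hlb, hab]
    exfalso
    -- split T v at a
    obtain ⟨ρ, σ, hπs, hσ, haEP'⟩ := split_of_filter_getLast? hla
    have haEP : a ∈ EP := by simpa using haEP'
    -- b is in both filters
    have hbF' : b ∈ (T' v).filter (· ∈ EP) := List.getLast_mem hF'
    have hbF : b ∈ (T v).filter (· ∈ EP) := (hmemiff b).2 hbF'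
    have hbEP : b ∈ EP := by simpa using (List.mem_filter.1 hbF).2
    have hbπ : b ∈ T v := (List.mem_filter.1 hbF).1
    -- b ∈ ρ
    have hbρ : b ∈ ρ := by
      rw [hπs] at hbπ
      rcases List.mem_append.1 hbπ with h | h
      · exact h
      rcases List.mem_cons.1 h with h | h
      · exact absurd h.symm hab
      · exfalso
        have : b ∈ σ.filter (· ∈ EP) := List.mem_filter.2 ⟨h, by simpa using hbEP⟩
        rw [hσ] at this
        exact absurd this List.not_mem_nil
    -- split T' v at b
    obtain ⟨ρ', σ', hπ's, hσ', _⟩ := split_of_filter_getLast? hlb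
    -- a ∈ ρ'
    have haF : a ∈ (T v).filter (· ∈ EP) := List.getLast_mem hF
    have haF' : a ∈ (T' v).filter (· ∈ EP) := (hmemiff a).1 haF
    have haπ' : a ∈ T' v := (List.mem_filter.1 haF').1
    have haρ' : a ∈ ρ' := by
      rw [hπ's] at haπ'
      rcases List.mem_append.1 haπ' with h | h
      · exact h
      rcases List.mem_cons.1 h with h | h
      · exact absurd h hab
      · exfalso
        have : a ∈ σ'.filter (· ∈ EP) := List.mem_filter.2 ⟨h, by simpa using haEP⟩
        rw [hσ'] at this
        exact absurd this List.not_mem_nil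
    obtain ⟨X, Y, hXY⟩ := List.append_of_mem haρ'
    have hπ'2 : T' v = X ++ a :: (Y ++ b :: σ') := by
      rw [hπ's, hXY]
      simp
    -- walks
    rw [hπs] at hw1
    obtain ⟨m, hρw, hsa, hσw⟩ : ∃ m, IsWalk G r m ρ ∧ G.src a = m ∧ IsWalk G (G.tgt a) v σ := by
      obtain ⟨m, h1, h2, h3⟩ := isWalk_append.1 hw1
      exact ⟨m, h1, h2, h3⟩
    rw [hπ'2] at hw2
    obtain ⟨m', hXw, hsa', hBw⟩ :
        ∃ m', IsWalk G r m' X ∧ G.src a = m' ∧ IsWalk G (G.tgt a) v (Y ++ b :: σ') := by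
      obtain ⟨m', h1, h2, h3⟩ := isWalk_append.1 hw2
      exact ⟨m', h1, h2, h3⟩
    -- the two exchange walks
    have hτw : IsWalk G r v (ρ ++ a :: (Y ++ b :: σ')) :=
      isWalk_append.2 ⟨m, hρw, hsa, hBw⟩
    have hτ'w : IsWalk G r v (X ++ a :: σ) :=
      isWalk_append.2 ⟨m', hXw, hsa', hσw⟩
    -- τ is not nodup (b appears twice)
    have hτnd : ¬ (ρ ++ a :: (Y ++ b :: σ')).Nodup := by
      intro h
      have hdisj := (List.nodup_append.1 h).2.2
      exact hdisj b hbρ b (List.mem_cons_of_mem _ (List.mem_append_right _ List.mem_cons_self)) rfl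
    -- pathify both
    obtain ⟨τ₀, hτ₀w, hτ₀nd, _, hstrict, _⟩ :=
      pathify hwpos (ρ ++ a :: (Y ++ b :: σ')).length _ le_rfl r v hτw
    obtain ⟨τ₁, hτ₁w, hτ₁nd, hτ₁le, _, _⟩ :=
      pathify hwpos (X ++ a :: σ).length _ le_rfl r v hτ'w
    have h1 : wval (wp c p EP) (T v) ≤ wval (wp c p EP) τ₀ := lexLe_fst (hmin τ₀ ⟨hτ₀w, hτ₀nd⟩)
    have h2 : wval (wp c p EP) τ₀ < wval (wp c p EP) (ρ ++ a :: (Y ++ b :: σ')) := hstrict hτnd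
    have h3 : wval (wp c p EP) (T v) ≤ wval (wp c p EP) τ₁ := lexLe_fst (hmin τ₁ ⟨hτ₁w, hτ₁nd⟩)
    -- weight computations
    have e1 : wval (wp c p EP) (T v) =
        wval (wp c p EP) ρ + (wp c p EP a + wval (wp c p EP) σ) := by
      rw [hπs, wval_append, wval_cons]
    have e2 : wval (wp c p EP) (T' v) =
        wval (wp c p EP) X + (wp c p EP a +
          (wval (wp c p EP) Y + (wp c p EP b + wval (wp c p EP) σ'))) := by
      rw [hπ'2, wval_append, wval_cons, wval_append, wval_cons]
    have e3 : wval (wp c p EP) (ρ ++ a :: (Y ++ b :: σ')) =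
        wval (wp c p EP) ρ + (wp c p EP a +
          (wval (wp c p EP) Y + (wp c p EP b + wval (wp c p EP) σ'))) := by
      rw [wval_append, wval_cons, wval_append, wval_cons]
    have e4 : wval (wp c p EP) (X ++ a :: σ) =
        wval (wp c p EP) X + (wp c p EP a + wval (wp c p EP) σ) := by
      rw [wval_append, wval_cons]
    linarith

/-- If `T` and `T'` are both `ŵ_p`-shortest path trees from `r` then, for every priceable
edge `e_i`, the set `V_T(e_i,p)` of vertices `v` such that `e_i` is the last priceable edge
on `T[r,v]` equals `V_{T'}(e_i,p)`. -/
theorem stmt_6 {V E : Type} [DecidableEq E]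
    (G : Dgraph V E) (r : V) (EP : Finset E) (c p : E → ℝ) (idx : E → ℕ)
    (hc : ∀ e ∉ EP, 0 < c e) (hp : ∀ e ∈ EP, 0 < p e)
    (hidx : ∀ e ∈ EP, ∀ e' ∈ EP, idx e = idx e' → e = e')
    (k : ℕ) (pe : Fin k → E) (hpe_inj : Function.Injective pe)
    (hpe_mem : ∀ i, pe i ∈ EP)
    (T T' : V → List E)
    (hT : IsHatSPT G r c p EP idx T) (hT' : IsHatSPT G r c p EP idx T') :
    ∀ i : Fin k,
      {v : V | lastP EP (T v) = some (pe i)} = {v : V | lastP EP (T' v) = some (pe i)} := by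
  intro i
  ext v
  simp only [Set.mem_setOf_eq, lastP_eq_of_hatSPT hc hp hidx hT hT' v]
end

section
/- Suppose T is a ŵ_p-shortest path tree and T* is any shortest path tree with respect to w_p. Then for every vertex v, p(T[r,v]) ≥ p(T*[r,v]); that is, among all shortest path trees, a lexicographically shortest tree maximizes the revenue of the leader on every root-to-vertex path simultaneously. -/
/-- If `T` is a `ŵ_p`-shortest path tree and `T*` is any shortest path tree with respect to
`w_p`, then `p(T[r,v]) ≥ p(T*[r,v])` for every vertex `v`: a lexicographically shortest
tree simultaneously maximizes the leader's revenue on every root-to-vertex path. -/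
theorem stmt_17 {V E : Type} [DecidableEq E]
    (G : Dgraph V E) (r : V) (EP : Finset E) (c p : E → ℝ) (idx : E → ℕ)
    (hc : ∀ e ∉ EP, 0 < c e) (hp : ∀ e ∈ EP, 0 < p e)
    (T Tstar : V → List E)
    (hT : IsHatSPT G r c p EP idx T) (hTstar : IsSPT G r c p EP Tstar) :
    ∀ v : V, pval p EP (Tstar v) ≤ pval p EP (T v) := by
  intro v
  obtain ⟨hTp, hTmin⟩ := hT v
  obtain ⟨hSp, hSmin⟩ := hTstar v
  have h1 : wval (wp c p EP) (Tstar v) ≤ wval (wp c p EP) (T v) := hSmin _ hTp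
  have h2 := hTmin _ hSp
  rcases h2 with h | h
  · rcases h with hlt | ⟨heq, h⟩
    · simp only [hatw] at hlt; linarith
    · rcases h with hlt | ⟨_, _⟩ <;> simp only [hatw] at * <;> linarith
  · have : pval p EP (T v) = pval p EP (Tstar v) := by
      have := congrArg (fun x => x.2.1) h
      simp only [hatw] at this; linarith
    linarith
end
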